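/- arXiv:0902.1189 — 8 statements merged into one kernel-verified Lean document; each statement's English description precedes it below -/
import Mathlib

section
/- Let A : X ⇉ X* be a monotone linear relation. Then the function g : X × X* → (−∞,+∞], g(x,x*) = ⟨x, x*⟩ + ι_{gra A}(x,x*) (equal to ⟨x,x*⟩ on gra A and +∞ elsewhere), is convex. -/
open Classical in

/-- For a monotone linear relation with graph `G`, the function
`g(x,x*) = ⟨x,x*⟩ + ι_G(x,x*)` is convex. -/
theorem stmt_4 {X : Type*} [NormedAddCommGroup X] [NormedSpace ℝ X] [CompleteSpace X]
    (G : Submodule ℝ (X × (X →L[ℝ] ℝ)))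
    (hmono : ∀ p ∈ G, ∀ q ∈ G, 0 ≤ (p.2 - q.2) (p.1 - q.1))
    (g : X × (X →L[ℝ] ℝ) → EReal)
    (hg : ∀ p, g p = if p ∈ G then ((p.2 p.1 : ℝ) : EReal) else ⊤) :
    ∀ p q : X × (X →L[ℝ] ℝ), ∀ lam ∈ Set.Icc (0:ℝ) 1,
      g (lam • p + (1 - lam) • q) ≤ (lam : EReal) * g p + ((1 - lam : ℝ) : EReal) * g q := by
  intro p q lam ⟨h0, h1⟩
  have gne : ∀ r, g r ≠ ⊥ := by
    intro r
    rw [hg r]; split <;> simp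
  rcases eq_or_lt_of_le h0 with rfl | h0'
  · simp [zero_smul, one_smul]
  rcases eq_or_lt_of_le h1 with rfl | h1'
  · simp [zero_smul, one_smul]
  by_cases hp : p ∈ G
  · by_cases hq : q ∈ G
    · have hmem : lam • p + (1 - lam) • q ∈ G :=
        G.add_mem (G.smul_mem _ hp) (G.smul_mem _ hq)
      rw [hg, hg, hg, if_pos hmem, if_pos hp, if_pos hq,
        ← EReal.coe_mul, ← EReal.coe_mul, ← EReal.coe_add, EReal.coe_le_coe_iff]
      have hm := hmono p hp q hq
      simp only [ContinuousLinearMap.sub_apply, map_sub] at hm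
      have happ : (lam • p + (1 - lam) • q).2 (lam • p + (1 - lam) • q).1
          = (lam • p.2 + (1 - lam) • q.2) (lam • p.1 + (1 - lam) • q.1) := rfl
      rw [happ]
      simp only [ContinuousLinearMap.add_apply, ContinuousLinearMap.smul_apply, map_add,
        map_smul, smul_eq_mul]
      nlinarith [mul_nonneg (mul_nonneg h0 (sub_nonneg.mpr h1)) hm]
    · have : g q = ⊤ := by rw [hg, if_neg hq]
      rw [this]
      have : ((1 - lam : ℝ) : EReal) * ⊤ = ⊤ := by
        rw [EReal.mul_top_of_pos]; exact_mod_cast sub_pos.mpr h1'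
      rw [this, EReal.add_top_of_ne_bot]
      · exact le_top
      · rw [hg, if_pos hp, ← EReal.coe_mul]
        exact EReal.coe_ne_bot _
  · have : g p = ⊤ := by rw [hg, if_neg hp]
    rw [this]
    have : (lam : EReal) * ⊤ = ⊤ := by
      rw [EReal.mul_top_of_pos]; exact_mod_cast h0'
    rw [this, EReal.top_add_of_ne_bot]
    · exact le_top
    · rw [hg]
      split
      · rw [← EReal.coe_mul]; exact EReal.coe_ne_bot _
      · rw [EReal.coe_mul_top_of_pos (sub_pos.mpr h1')]; simp
end

section
/- Let A : X ⇉ X* be maximal monotone. Then the closed span of the projection onto X of the domain of the Fitzpatrick function F_A equals the closed span of dom A, i.e., cl span(P_X dom F_A) = cl span(dom A). -/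
/-- Simons: for maximal monotone `A` with graph `G`,
`cl span (P_X dom F_A) = cl span (dom A)`. -/
theorem stmt_7 {X : Type*} [NormedAddCommGroup X] [NormedSpace ℝ X] [CompleteSpace X]
    (G : Set (X × (X →L[ℝ] ℝ)))
    (hmono : ∀ p ∈ G, ∀ q ∈ G, 0 ≤ (p.2 - q.2) (p.1 - q.1))
    (hmax : ∀ p : X × (X →L[ℝ] ℝ), (∀ q ∈ G, 0 ≤ (p.2 - q.2) (p.1 - q.1)) → p ∈ G)
    (F : X × (X →L[ℝ] ℝ) → EReal)
    (hF : ∀ p, F p = sSup {r : EReal |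
      ∃ q ∈ G, r = ((q.2 p.1 + p.2 q.1 - q.2 q.1 : ℝ) : EReal)}) :
    closure (Submodule.span ℝ (Prod.fst '' {p : X × (X →L[ℝ] ℝ) | F p < ⊤}) : Set X)
      = closure (Submodule.span ℝ {x : X | ∃ xstar, (x, xstar) ∈ G} : Set X) := by
  have hne : G.Nonempty := by
    rcases Set.eq_empty_or_nonempty G with h | h
    · exact ⟨(0, 0), hmax _ (by simp [h])⟩
    · exact h
  set D : Set X := {x : X | ∃ xstar, (x, xstar) ∈ G} with hD
  set Y := (Submodule.span ℝ D).topologicalClosure with hY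
  have hYcoe : (Y : Set X) = closure (Submodule.span ℝ D : Set X) := rfl
  -- dom A ⊆ P_X dom F
  have h1 : D ⊆ Prod.fst '' {p | F p < ⊤} := by
    rintro a ⟨a', ha⟩
    refine ⟨(a, a'), ?_, rfl⟩
    show F (a, a') < ⊤
    rw [hF]
    refine lt_of_le_of_lt (sSup_le ?_) (EReal.coe_lt_top (a' a))
    rintro r ⟨⟨b, b'⟩, hq, rfl⟩
    have h := hmono _ ha _ hq
    simp only [ContinuousLinearMap.sub_apply, map_sub] at h ⊢
    exact EReal.coe_le_coe_iff.2 (by linarith)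
  -- P_X dom F ⊆ Y
  have h2 : Prod.fst '' {p | F p < ⊤} ⊆ (Y : Set X) := by
    rintro x ⟨p, hp, rfl⟩
    by_contra hx
    obtain ⟨f, u, hfu, hux⟩ := geometric_hahn_banach_closed_point
      Y.convex (Submodule.span ℝ D).isClosed_topologicalClosure hx
    have hu0 : 0 < u := by simpa using hfu 0 Y.zero_mem
    have hfY : ∀ a ∈ Y, f a = 0 := by
      intro a ha
      by_contra hfa
      have h := hfu (((u + 1) / f a) • a) (Y.smul_mem _ ha)
      rw [map_smul, smul_eq_mul, div_mul_cancel₀ _ hfa] at h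
      linarith
    have hfx : 0 < f p.1 := lt_trans hu0 hux
    have key : ∀ R : ℝ, (R : EReal) < F p := by
      intro R
      obtain ⟨⟨a, a'⟩, haG⟩ := hne
      have haY : a ∈ Y :=
        Submodule.le_topologicalClosure _ (Submodule.subset_span ⟨a', haG⟩)
      set c0 : ℝ := a' p.1 + p.2 a - a' a with hc0
      set lam : ℝ := (R + 1 - c0) / f p.1 with hlam
      have hmem : (a, a' + lam • f) ∈ G := by
        apply hmax
        rintro ⟨b, b'⟩ hbG
        have hm := hmono _ haG _ hbG
        have hbY : b ∈ Y :=
          Submodule.le_topologicalClosure _ (Submodule.subset_span ⟨b', hbG⟩)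
        simp only [ContinuousLinearMap.sub_apply, ContinuousLinearMap.add_apply,
          ContinuousLinearMap.coe_smul', Pi.smul_apply, map_sub, smul_eq_mul] at hm ⊢
        rw [hfY a haY, hfY b hbY]
        simp only [sub_zero, mul_zero, sub_self]
        linarith
      have hval : ((a' + lam • f) p.1 + p.2 a - (a' + lam • f) a : ℝ) = R + 1 := by
        simp only [ContinuousLinearMap.add_apply, ContinuousLinearMap.coe_smul',
          Pi.smul_apply, smul_eq_mul, hfY a haY, mul_zero, add_zero]
        rw [hlam, div_mul_cancel₀ _ (ne_of_gt hfx), hc0]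
        ring
      have hle : ((R + 1 : ℝ) : EReal) ≤ F p := by
        rw [hF]
        exact le_sSup ⟨(a, a' + lam • f), hmem, by rw [hval]⟩
      calc (R : EReal) < ((R + 1 : ℝ) : EReal) := by
            exact_mod_cast (by linarith : R < R + 1)
        _ ≤ F p := hle
    obtain ⟨r, hr1, hr2⟩ := EReal.lt_iff_exists_real_btwn.1 hp
    exact absurd (key r) (not_lt.2 (le_of_lt hr1))
  apply Set.Subset.antisymm
  · have hspan : Submodule.span ℝ (Prod.fst '' {p : X × (X →L[ℝ] ℝ) | F p < ⊤}) ≤ Y :=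
      Submodule.span_le.2 h2
    calc closure (Submodule.span ℝ (Prod.fst '' {p : X × (X →L[ℝ] ℝ) | F p < ⊤}) : Set X)
        ⊆ closure (Y : Set X) :=
          closure_mono hspan
      _ = (Y : Set X) :=
          IsClosed.closure_eq (Submodule.span ℝ D).isClosed_topologicalClosure
      _ = closure (Submodule.span ℝ D : Set X) := hYcoe
  · exact closure_mono (Submodule.span_mono h1)
end

section
/- Let A : X ⇉ X* be a set-valued operator, C ⊆ X nonempty closed convex, and (z, z*) ∈ X × X*. Define I_C(x) = {0} if x ∈ C and ∅ otherwise, and for a ∈ C let T_C(a) = {x ∈ X : ⟨x, a*⟩ ≤ 0 for all a* ∈ N_C(a)}. Then (z,z*) is monotonically related to gra(A + N_C) if and only if (z,z*) is monotonically related to gra(A + I_C) and z ∈ a + T_C(a) for every a ∈ dom A ∩ C. -/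
open Classical in
/-- `(z,z*)` is monotonically related to `gra (A + N_C)` iff it is monotonically related
to `gra (A + I_C)` and `z ∈ a + T_C(a)` for every `a ∈ dom A ∩ C`. -/
theorem stmt_8 {X : Type*} [NormedAddCommGroup X] [NormedSpace ℝ X] [CompleteSpace X]
    (A : X → Set (X →L[ℝ] ℝ))
    (C : Set X) (hCne : C.Nonempty) (hCcl : IsClosed C) (hCcv : Convex ℝ C)
    (z : X) (zstar : X →L[ℝ] ℝ)
    (N : X → Set (X →L[ℝ] ℝ))
    (hN : ∀ x, N x = if x ∈ C then {xstar | ∀ c ∈ C, xstar (c - x) ≤ 0} else ∅)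
    (I : X → Set (X →L[ℝ] ℝ))
    (hI : ∀ x, I x = if x ∈ C then {0} else ∅)
    (T : X → Set X)
    (hT : ∀ a, T a = {x : X | ∀ astar ∈ N a, astar x ≤ 0}) :
    (∀ (y : X) (astar nstar : X →L[ℝ] ℝ), astar ∈ A y → nstar ∈ N y →
        0 ≤ (zstar - (astar + nstar)) (z - y))
      ↔ ((∀ (y : X) (astar istar : X →L[ℝ] ℝ), astar ∈ A y → istar ∈ I y →
            0 ≤ (zstar - (astar + istar)) (z - y))
          ∧ ∀ a, (A a).Nonempty → a ∈ C → z - a ∈ T a) := by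
  constructor
  · intro h
    constructor
    · intro y astar istar hA hI'
      rw [hI y] at hI'
      split_ifs at hI' with hyC
      · rcases hI' with rfl
        have h0 : (0 : X →L[ℝ] ℝ) ∈ N y := by
          rw [hN y]; simp [hyC]
        exact h y astar 0 hA h0
      · exact absurd hI' (Set.notMem_empty _)
    · intro a hAa haC
      rcases hAa with ⟨astar, hastar⟩
      rw [hT a]
      intro nstar hn
      by_contra hpos
      push_neg at hpos
      rw [hN a] at hn
      simp only [haC, if_true, Set.mem_setOf_eq] at hn
      set v := nstar (z - a) with hv
      set K := (zstar - astar) (z - a) with hK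
      have hK0 : 0 ≤ K := by
        have h0 : (0 : X →L[ℝ] ℝ) ∈ N a := by rw [hN a]; simp [haC]
        have := h a astar 0 hastar h0
        simpa [K] using this
      set t : ℝ := (K + 1) / v with ht
      have ht0 : 0 ≤ t := div_nonneg (by linarith) hpos.le
      have htn : (t • nstar) ∈ N a := by
        rw [hN a]
        simp only [haC, if_true, Set.mem_setOf_eq]
        intro c hc
        have := hn c hc
        simpa using mul_nonpos_of_nonneg_of_nonpos ht0 this
      have := h a astar (t • nstar) hastar htn
      simp only [ContinuousLinearMap.sub_apply, ContinuousLinearMap.add_apply,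
        ContinuousLinearMap.smul_apply, smul_eq_mul] at this
      have htv : t * v = K + 1 := div_mul_cancel₀ _ (ne_of_gt hpos)
      have hKeq : zstar (z - a) - astar (z - a) = K := by
        simp [hK]
      nlinarith [this, htv, hKeq]
  · rintro ⟨h1, h2⟩ y astar nstar hA hn
    have hyC : y ∈ C := by
      by_contra hyC
      rw [hN y] at hn; simp [hyC] at hn
    have hI0 : (0 : X →L[ℝ] ℝ) ∈ I y := by rw [hI y]; simp [hyC]
    have hbase := h1 y astar 0 hA hI0
    have hT' := h2 y ⟨astar, hA⟩ hyC
    rw [hT y] at hT'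
    have hns := hT' nstar hn
    simp only [ContinuousLinearMap.sub_apply, ContinuousLinearMap.add_apply,
      ContinuousLinearMap.zero_apply] at hbase ⊢
    linarith
end

section
/- Let A : X ⇉ X* be a set-valued operator, C ⊆ X nonempty closed convex, and suppose (z,z*) is monotonically related to gra(A + N_C). Then for every a ∈ dom A ∩ C, ⟨z − a, a*⟩ ≤ 0 for all a* ∈ N_C(a), i.e., z − a lies in the tangent cone T_C(a). -/
open Classical in
/-- If `(z,z*)` is monotonically related to `gra (A + N_C)`, then for every
`a ∈ dom A ∩ C`, `⟨z - a, a*⟩ ≤ 0` for all `a* ∈ N_C(a)`. -/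
theorem stmt_9 {X : Type*} [NormedAddCommGroup X] [NormedSpace ℝ X] [CompleteSpace X]
    (A : X → Set (X →L[ℝ] ℝ))
    (C : Set X) (hCne : C.Nonempty) (hCcl : IsClosed C) (hCcv : Convex ℝ C)
    (z : X) (zstar : X →L[ℝ] ℝ)
    (N : X → Set (X →L[ℝ] ℝ))
    (hN : ∀ x, N x = if x ∈ C then {xstar | ∀ c ∈ C, xstar (c - x) ≤ 0} else ∅)
    (hrel : ∀ (y : X) (astar nstar : X →L[ℝ] ℝ), astar ∈ A y → nstar ∈ N y →
      0 ≤ (zstar - (astar + nstar)) (z - y)) :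
    ∀ a, (A a).Nonempty → a ∈ C → ∀ astar ∈ N a, astar (z - a) ≤ 0 := by
  intro a hA haC astar hastar
  obtain ⟨bstar, hbstar⟩ := hA
  rw [hN a, if_pos haC] at hastar
  by_contra h
  push_neg at h
  -- choose t large so that t * astar (z - a) > (zstar - bstar) (z - a)
  set K := (zstar - bstar) (z - a) with hK
  set t := (max K 0 + 1) / astar (z - a) with ht
  have ht0 : 0 ≤ t := div_nonneg (by positivity) h.le
  -- t • astar ∈ N a
  have hmem : (t • astar) ∈ N a := by
    rw [hN a, if_pos haC]
    intro c hc
    have := hastar c hc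
    simp only [ContinuousLinearMap.smul_apply, smul_eq_mul]
    exact mul_nonpos_of_nonneg_of_nonpos ht0 this
  have := hrel a bstar (t • astar) hbstar hmem
  simp only [ContinuousLinearMap.sub_apply, ContinuousLinearMap.add_apply,
    ContinuousLinearMap.smul_apply, smul_eq_mul] at this
  have htz : t * astar (z - a) = max K 0 + 1 := div_mul_cancel₀ _ (ne_of_gt h)
  have hKle : K ≤ max K 0 := le_max_left _ _
  have : (0:ℝ) ≤ K - (max K 0 + 1) := by
    calc (0:ℝ) ≤ zstar (z - a) - (bstar (z - a) + t * astar (z - a)) := this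
    _ = K - t * astar (z - a) := by simp [hK]; ring
    _ = K - (max K 0 + 1) := by rw [htz]
  linarith
end

section
/- Let A : X ⇉ X* be a maximal monotone linear relation, C ⊆ X nonempty closed convex with dom A ∩ int C ≠ ∅, and suppose (z,z*) is monotonically related to gra(A+N_C). If there exists y* ∈ X* such that F_A(z,y*) − ⟨z,y*⟩ + ⟨c − z, z* − y*⟩ ≤ 0 for all c ∈ C, and if z ∈ C, then (z,z*) ∈ gra(A+N_C). -/
open Classical in
/-- If `(z,z*)` is monotonically related to `gra (A+N_C)`, `z ∈ C`, and there is `y*`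
with `F_A(z,y*) - ⟨z,y*⟩ + ⟨c-z, z*-y*⟩ ≤ 0` for all `c ∈ C`, then
`(z,z*) ∈ gra (A + N_C)`. -/
theorem stmt_12 {X : Type*} [NormedAddCommGroup X] [NormedSpace ℝ X] [CompleteSpace X]
    (G : Submodule ℝ (X × (X →L[ℝ] ℝ)))
    (hmono : ∀ p ∈ G, ∀ q ∈ G, 0 ≤ (p.2 - q.2) (p.1 - q.1))
    (hmax : ∀ p : X × (X →L[ℝ] ℝ), (∀ q ∈ G, 0 ≤ (p.2 - q.2) (p.1 - q.1)) → p ∈ G)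
    (C : Set X) (hCne : C.Nonempty) (hCcl : IsClosed C) (hCcv : Convex ℝ C)
    (hdom : ∃ x, (∃ xstar, (x, xstar) ∈ G) ∧ x ∈ interior C)
    (N : X → Set (X →L[ℝ] ℝ))
    (hN : ∀ x, N x = if x ∈ C then {xstar | ∀ c ∈ C, xstar (c - x) ≤ 0} else ∅)
    (F : X × (X →L[ℝ] ℝ) → EReal)
    (hF : ∀ p, F p = sSup {r : EReal | ∃ q ∈ (G : Set (X × (X →L[ℝ] ℝ))),
      r = ((q.2 p.1 + p.2 q.1 - q.2 q.1 : ℝ) : EReal)})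
    (z : X) (zstar : X →L[ℝ] ℝ)
    (hrel : ∀ (y : X) (astar nstar : X →L[ℝ] ℝ), (y, astar) ∈ G → nstar ∈ N y →
      0 ≤ (zstar - (astar + nstar)) (z - y))
    (ystar : X →L[ℝ] ℝ)
    (hy : ∀ c ∈ C, F (z, ystar) + (((zstar - ystar) (c - z) - ystar z : ℝ) : EReal) ≤ 0)
    (hzC : z ∈ C) :
    ∃ astar nstar : X →L[ℝ] ℝ, (z, astar) ∈ G ∧ nstar ∈ N z ∧ zstar = astar + nstar := by
  -- key: every element of the sup set is ≤ F (z, ystar)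
  have hle : ∀ q ∈ G, ((q.2 z + ystar q.1 - q.2 q.1 : ℝ) : EReal) ≤ F (z, ystar) := by
    intro q hq
    rw [hF]
    exact le_sSup ⟨q, hq, rfl⟩
  -- bound from hy combined with the sup bound
  have key : ∀ c ∈ C, ∀ q ∈ G,
      q.2 z + ystar q.1 - q.2 q.1 + ((zstar - ystar) (c - z) - ystar z) ≤ 0 := by
    intro c hc q hq
    have h1 := hy c hc
    have h2 : ((q.2 z + ystar q.1 - q.2 q.1 : ℝ) : EReal)
        + (((zstar - ystar) (c - z) - ystar z : ℝ) : EReal) ≤ 0 :=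
      le_trans (add_le_add (hle q hq) le_rfl) h1
    rw [← EReal.coe_add] at h2
    exact_mod_cast h2
  -- (z, ystar) ∈ G by maximality
  have hzy : (z, ystar) ∈ G := by
    apply hmax
    intro q hq
    have := key z hzC q hq
    simp only [sub_self, map_zero, zero_sub] at this
    have : q.2 z + ystar q.1 - q.2 q.1 - ystar z ≤ 0 := by linarith
    have expand : ((z, ystar).2 - q.2) ((z, ystar).1 - q.1)
        = ystar z - ystar q.1 - q.2 z + q.2 q.1 := by
      simp [ContinuousLinearMap.sub_apply, map_sub]; ring
    rw [expand]; linarith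
  refine ⟨ystar, zstar - ystar, hzy, ?_, by abel⟩
  rw [hN]
  simp only [hzC, if_true, Set.mem_setOf_eq]
  intro c hc
  have := key c hc (z, ystar) hzy
  simp only at this
  linarith
end

section
/- Let A : X → X* be maximal monotone and at most single-valued with A linear on its domain, and let C ⊆ X be nonempty closed convex with dom A ∩ int C ≠ ∅. Then A + N_C is maximal monotone. -/
private lemma aux_G_nonpos (K G : ℝ) (h : ∀ s : ℝ, 0 ≤ s → 0 ≤ K - s * G) : G ≤ 0 := by
  by_contra hG
  push_neg at hG
  have h0 := h 0 le_rfl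
  have hs := h ((K + 1) / G) (le_of_lt (div_pos (by linarith) hG))
  rw [div_mul_cancel₀ _ (ne_of_gt hG)] at hs
  linarith

private lemma aux_tQ (a Q : ℝ) (hQ : 0 ≤ Q) (h : ∀ t : ℝ, 0 < t → t ≤ 1 → a ≤ t * Q) : a ≤ 0 := by
  rcases eq_or_lt_of_le hQ with hQ0 | hQ0
  · have := h 1 one_pos le_rfl
    rw [← hQ0] at this
    linarith
  · by_contra ha
    push_neg at ha
    have hm : (0:ℝ) < 2 * Q := by linarith
    have ht := h (min 1 (a / (2 * Q))) (lt_min one_pos (div_pos ha hm)) (min_le_left _ _)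
    have h1 : min 1 (a / (2 * Q)) ≤ a / (2 * Q) := min_le_right _ _
    have h2 := mul_le_mul_of_nonneg_right h1 hQ
    have h3 : a / (2 * Q) * Q = a / 2 := by
      field_simp
    rw [h3] at h2
    linarith

private lemma aux_limit (v c d : ℝ) (h : ∀ b : ℝ, 0 < b → b ≤ 1/2 → v + b * d ≤ c) : v ≤ c := by
  by_contra hv
  push_neg at hv
  rcases le_or_gt 0 d with hd | hd
  · have := h (1/2) (by norm_num) le_rfl
    nlinarith
  · set e := -d with he
    have he0 : 0 < e := by simp [he]; linarith
    have hb0 : 0 < min (1/2) ((v - c) / (2 * e)) := lt_min (by norm_num) (div_pos (by linarith) (by linarith))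
    have hb := h _ hb0 (min_le_left _ _)
    have h1 : min (1/2) ((v - c) / (2 * e)) ≤ (v - c) / (2 * e) := min_le_right _ _
    have h2 := mul_le_mul_of_nonneg_right h1 he0.le
    have h3 : (v - c) / (2 * e) * e = (v - c) / 2 := by
      field_simp
    rw [h3] at h2
    have h4 : min (1/2) ((v - c) / (2 * e)) * d = -(min (1/2) ((v - c) / (2 * e)) * e) := by
      rw [he]; ring
    rw [h4] at hb
    linarith

private lemma aux_combo (a b s₁ s₂ zz zx₁ zx₂ a₁z a₁x₁ a₁x₂ a₂z a₂x₁ a₂x₂ : ℝ)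
    (ha : 0 ≤ a) (hb : 0 ≤ b) (hab : a + b = 1)
    (h₁ : zz - zx₁ - a₁z + a₁x₁ ≤ s₁)
    (h₂ : zz - zx₂ - a₂z + a₂x₂ ≤ s₂)
    (hm : 0 ≤ a₁x₁ - a₁x₂ - a₂x₁ + a₂x₂) :
    zz - (a*zx₁ + b*zx₂) - (a*a₁z + b*a₂z) + (a*(a*a₁x₁ + b*a₁x₂) + b*(a*a₂x₁ + b*a₂x₂))
      ≤ a*s₁ + b*s₂ := by
  have hb' : b = 1 - a := by linarith
  subst hb'
  nlinarith [mul_le_mul_of_nonneg_left h₁ ha, mul_le_mul_of_nonneg_left h₂ (by linarith : (0:ℝ) ≤ 1 - a),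
    mul_nonneg (mul_nonneg ha (by linarith : (0:ℝ) ≤ 1 - a)) hm]

private lemma aux_eqzero (c u : ℝ) (h : ∀ t : ℝ, t * c < u) : c = 0 := by
  by_contra hc
  have h1 := h ((|u| + 1) / c)
  rw [div_mul_cancel₀ _ hc] at h1
  have := le_abs_self u
  linarith

set_option maxHeartbeats 1000000 in
private lemma step_one {X : Type*} [NormedAddCommGroup X] [NormedSpace ℝ X]
    (A : X → Set (X →L[ℝ] ℝ))
    (hadd : ∀ x y xstar ystar, xstar ∈ A x → ystar ∈ A y → xstar + ystar ∈ A (x + y))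
    (hsmul : ∀ (c : ℝ) x xstar, xstar ∈ A x → c • xstar ∈ A (c • x))
    (C : Set X) (hCcl : IsClosed C) (hCcv : Convex ℝ C)
    (z x0 : X) (a0 : X →L[ℝ] ℝ) (ha0 : a0 ∈ A x0)
    (r : ℝ) (hr0 : 0 < r) (hball : Metric.ball x0 r ⊆ C) (hx0C : x0 ∈ C)
    (hdense : ∀ (v : X) (ε : ℝ), 0 < ε → ∃ d astar, astar ∈ A d ∧ ‖d - v‖ < ε)
    (hrelN : ∀ (y : X) (ay g : X →L[ℝ] ℝ), ay ∈ A y → y ∈ C →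
        (∀ c ∈ C, g (c - y) ≤ 0) → g (z - y) ≤ 0)
    (hpull : ∀ c ∈ C, ∀ s : ℝ, 0 < s → s ≤ 1 →
        Metric.ball (c + s • (x0 - c)) (s * r) ⊆ C) :
    z ∈ C := by
  by_contra hz
  obtain ⟨δ, hδ0, hδ⟩ : ∃ δ > 0, ∀ w ∈ C, δ ≤ ‖w - z‖ := by
    have hmem : Cᶜ ∈ nhds z := hCcl.isOpen_compl.mem_nhds hz
    rcases Metric.mem_nhds_iff.mp hmem with ⟨δ, hδ0, hsub⟩
    refine ⟨δ, hδ0, fun w hw => ?_⟩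
    by_contra hcon
    push_neg at hcon
    exact (hsub (by rw [Metric.mem_ball, dist_eq_norm]; exact hcon) : w ∈ Cᶜ) hw
  set M := ‖z - x0‖ + δ with hM_def
  have hM : 0 < M := by
    have := norm_nonneg (z - x0)
    simp only [hM_def]
    linarith
  set ε := min (δ/2) (r*δ/(5*M)) with hε_def
  have hε0 : 0 < ε := lt_min (by linarith) (by positivity)
  have hεδ : ε ≤ δ/2 := min_le_left _ _
  have hεr : ε ≤ r*δ/(5*M) := min_le_right _ _
  obtain ⟨d, ad, had, hdz⟩ := hdense z ε hε0
  have hdC : d ∉ C := by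
    intro hdC
    have := hδ d hdC
    linarith
  set T := Set.Icc (0:ℝ) 1 ∩ (fun t : ℝ => x0 + t • (d - x0)) ⁻¹' C with hT_def
  have hT0 : (0:ℝ) ∈ T := ⟨⟨le_rfl, zero_le_one⟩, by simpa using hx0C⟩
  have hTclosed : IsClosed T :=
    IsClosed.inter isClosed_Icc
      (IsClosed.preimage (continuous_const.add (continuous_id.smul continuous_const)) hCcl)
  have hTcomp : IsCompact T :=
    IsCompact.of_isClosed_subset isCompact_Icc hTclosed (fun t ht => ht.1)
  set t := sSup T with ht_def
  have htT : t ∈ T := hTcomp.sSup_mem ⟨0, hT0⟩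
  set y := x0 + t • (d - x0) with hy_def
  have hyC : y ∈ C := htT.2
  have ht0 : 0 ≤ t := htT.1.1
  have ht1' : t ≤ 1 := htT.1.2
  have ht1 : t < 1 := by
    rcases lt_or_eq_of_le ht1' with h | h
    · exact h
    · exfalso
      apply hdC
      have : y = d := by rw [hy_def, h]; module
      rwa [this] at hyC
  have hynotint : y ∉ interior C := by
    intro hy
    rcases Metric.mem_nhds_iff.mp (mem_interior_iff_mem_nhds.mp hy) with ⟨ρ, hρ0, hρ⟩
    set t' := min 1 (t + ρ/(2*(‖d - x0‖+1))) with ht'_def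
    have ht'le : t' ≤ t + ρ/(2*(‖d - x0‖+1)) := min_le_right _ _
    have hdx0pos : (0:ℝ) < ‖d - x0‖ + 1 := by positivity
    have ht'gt : t < t' := by
      have hq : 0 < ρ/(2*(‖d - x0‖+1)) := by positivity
      exact lt_min ht1 (by linarith)
    have ht'T : t' ∈ T := by
      constructor
      · exact ⟨le_trans ht0 ht'gt.le, min_le_left _ _⟩
      · have hpoint : x0 + t' • (d - x0) = y + (t' - t) • (d - x0) := by
          rw [hy_def]; module
        have hnorm : ‖(t' - t) • (d - x0)‖ < ρ := by
          rw [norm_smul, Real.norm_eq_abs, abs_of_pos (by linarith : (0:ℝ) < t' - t)]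
          have h1 : t' - t ≤ ρ/(2*(‖d - x0‖+1)) := by linarith
          have h2 : (t' - t) * ‖d - x0‖ ≤ ρ/(2*(‖d - x0‖+1)) * ‖d - x0‖ :=
            mul_le_mul_of_nonneg_right h1 (norm_nonneg _)
          have h3 : ρ/(2*(‖d - x0‖+1)) * ‖d - x0‖ < ρ := by
            rw [div_mul_eq_mul_div, div_lt_iff₀ (by positivity)]
            nlinarith [norm_nonneg (d - x0)]
          linarith
        show x0 + t' • (d - x0) ∈ C
        apply hρ
        rw [hpoint, Metric.mem_ball, dist_eq_norm]
        simpa using hnorm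
    have := le_csSup hTcomp.bddAbove ht'T
    rw [← ht_def] at this
    linarith
  have htpos : 0 < t := by
    rcases lt_or_eq_of_le ht0 with h | h
    · exact h
    · exfalso
      apply hynotint
      have : y = x0 := by rw [hy_def, ← h]; module
      rw [this]
      exact interior_maximal hball Metric.isOpen_ball (Metric.mem_ball_self hr0)
  have hdx0M : ‖d - x0‖ ≤ M := by
    have h1 : ‖d - x0‖ ≤ ‖d - z‖ + ‖z - x0‖ := by
      have := norm_add_le (d - z) (z - x0)
      rwa [sub_add_sub_cancel] at this
    rw [hM_def]
    linarith
  have hdx0pos : 0 < ‖d - x0‖ := by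
    rw [norm_pos_iff, sub_ne_zero]
    intro h
    rw [h] at hdC
    exact hdC hx0C
  have h1t : δ - ε ≤ (1-t) * ‖d - x0‖ := by
    have h1 : δ ≤ ‖y - z‖ := hδ y hyC
    have h2 : ‖y - z‖ ≤ ‖y - d‖ + ‖d - z‖ := by
      have := norm_add_le (y - d) (d - z)
      rwa [sub_add_sub_cancel] at this
    have h3 : y - d = (t - 1) • (d - x0) := by rw [hy_def]; module
    have h4 : ‖y - d‖ = (1 - t) * ‖d - x0‖ := by
      rw [h3, norm_smul, Real.norm_eq_abs, abs_of_nonpos (by linarith : t - 1 ≤ 0)]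
      ring_nf
    linarith
  obtain ⟨g, hg⟩ :=
    geometric_hahn_banach_open_point hCcv.interior isOpen_interior hynotint
  have hgball : ∀ w : X, ‖w‖ < r → g w < g y - g x0 := by
    intro w hw
    have hmem : x0 + w ∈ interior C := by
      apply interior_maximal hball Metric.isOpen_ball
      rw [Metric.mem_ball, dist_eq_norm]
      simpa using hw
    have := hg _ hmem
    rw [map_add] at this
    linarith
  have hβ : 0 < g y - g x0 := by
    have := hgball 0 (by simpa using hr0)
    simpa using this
  set β := g y - g x0 with hβ_def
  have hgzd : -(2*ε*β/r) < g (z - d) := by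
    have hscale : ∀ v : X, ‖v‖ < ε → g v < 2*ε*β/r := by
      intro v hv
      have hμpos : (0:ℝ) < r/(2*ε) := by positivity
      have h1 : ‖(r/(2*ε)) • v‖ < r := by
        rw [norm_smul, Real.norm_eq_abs, abs_of_pos hμpos]
        calc r/(2*ε) * ‖v‖ < r/(2*ε) * ε := by
              apply mul_lt_mul_of_pos_left hv hμpos
          _ = r/2 := by field_simp
          _ < r := by linarith
      have h2 := hgball _ h1
      rw [map_smul, smul_eq_mul] at h2
      have h3 : g v < β / (r/(2*ε)) := by
        rw [lt_div_iff₀ hμpos]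
        linarith [h2]
      have h4 : β / (r/(2*ε)) = 2*ε*β/r := by
        field_simp
      rwa [h4] at h3
    have hn : ‖-(z - d)‖ < ε := by
      rw [norm_neg]
      have : ‖z - d‖ = ‖d - z‖ := norm_sub_rev _ _
      rw [this]; exact hdz
    have := hscale (-(z - d)) hn
    rw [map_neg] at this
    linarith
  have hgdy : (1-t) * β ≤ g (d - y) := by
    have h1 : y - x0 = t • (d - x0) := by rw [hy_def]; module
    have h2 : g (y - x0) = t * g (d - x0) := by rw [h1, map_smul, smul_eq_mul]
    have h3 : g (y - x0) = β := by rw [hβ_def, map_sub]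
    have h4 : d - y = (1 - t) • (d - x0) := by rw [hy_def]; module
    have h5 : g (d - y) = (1 - t) * g (d - x0) := by rw [h4, map_smul, smul_eq_mul]
    have h6 : g (d - x0) = β / t := by
      rw [← h3, h2]
      field_simp
    rw [h5, h6]
    have h8 : β * t ≤ β := by nlinarith [hβ.le]
    have h7 : β ≤ β / t := (le_div_iff₀ htpos).mpr h8
    exact mul_le_mul_of_nonneg_left h7 (by linarith)
  have hgzypos : 0 < g (z - y) := by
    have hsplit : g (z - y) = g (z - d) + g (d - y) := by
      rw [← map_add]
      congr 1
      module
    rw [hsplit]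
    have h2 : (δ - ε) / M ≤ 1 - t := by
      rw [div_le_iff₀ hM]
      calc δ - ε ≤ (1-t) * ‖d - x0‖ := h1t
        _ ≤ (1-t) * M := mul_le_mul_of_nonneg_left hdx0M (by linarith)
    have h3 : (δ - ε)/M * β ≤ (1-t) * β := mul_le_mul_of_nonneg_right h2 hβ.le
    have h3' : (δ/2)/M * β ≤ (δ - ε)/M * β := by
      apply mul_le_mul_of_nonneg_right _ hβ.le
      apply (div_le_div_iff_of_pos_right hM).mpr
      linarith
    have h4 : 2*ε*β/r ≤ 2*(r*δ/(5*M))*β/r := by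
      apply (div_le_div_iff_of_pos_right hr0).mpr
      nlinarith [hβ.le]
    have h5 : 2*(r*δ/(5*M))*β/r = 2*δ*β/(5*M) := by
      field_simp
    have h6 : (δ/2)/M * β - 2*δ*β/(5*M) = δ*β/(10*M) := by
      field_simp
      ring
    have h7 : 0 < δ*β/(10*M) := by positivity
    have hzd' : -(2*δ*β/(5*M)) < g (z - d) := by linarith
    have hdy' : δ/2/M * β ≤ g (d - y) := le_trans h3' (le_trans h3 hgdy)
    have hsum := add_lt_add_of_lt_of_le hzd' hdy'
    linarith [hsum, h6, h7]
  have hgC : ∀ c ∈ C, g (c - y) ≤ 0 := by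
    intro c hc
    have hcy : g c ≤ g y := by
      apply aux_limit (g c) (g y) (g x0 - g c)
      intro b hb0 hb2
      have hmem : c + b • (x0 - c) ∈ interior C := by
        apply interior_maximal (hpull c hc b hb0 (by linarith)) Metric.isOpen_ball
        rw [Metric.mem_ball, dist_self]
        exact mul_pos hb0 hr0
      have := hg _ hmem
      rw [map_add, map_smul, smul_eq_mul, map_sub] at this
      linarith
    rw [map_sub]
    linarith
  have hnegmem : (-a0) ∈ A (-x0) := by
    have := hsmul (-1) x0 a0 ha0
    rwa [neg_one_smul, neg_one_smul ℝ a0] at this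
  have hsubmem : ad - a0 ∈ A (d - x0) := by
    have := hadd d (-x0) ad (-a0) had hnegmem
    rw [← sub_eq_add_neg, ← sub_eq_add_neg] at this
    exact this
  have hay : a0 + t • (ad - a0) ∈ A y := by
    rw [hy_def]
    exact hadd x0 (t • (d - x0)) a0 (t • (ad - a0)) ha0 (hsmul t _ _ hsubmem)
  have := hrelN y (a0 + t • (ad - a0)) g hay hyC hgC
  linarith


set_option maxHeartbeats 1000000 in
private lemma step_two {X : Type*} [NormedAddCommGroup X] [NormedSpace ℝ X]
    (A : X → Set (X →L[ℝ] ℝ))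
    (hadd : ∀ x y xstar ystar, xstar ∈ A x → ystar ∈ A y → xstar + ystar ∈ A (x + y))
    (hsmul : ∀ (c : ℝ) x xstar, xstar ∈ A x → c • xstar ∈ A (c • x))
    (hmono : ∀ x y xstar ystar, xstar ∈ A x → ystar ∈ A y →
      0 ≤ (xstar - ystar) (x - y))
    (C : Set X) (hCcv : Convex ℝ C)
    (z x0 : X) (zstar a0 : X →L[ℝ] ℝ) (ha0 : a0 ∈ A x0)
    (r : ℝ) (hr0 : 0 < r) (hball : Metric.ball x0 r ⊆ C) (hx0C : x0 ∈ C)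
    (hzC : z ∈ C)
    (hrel0 : ∀ x astar, astar ∈ A x → x ∈ C → 0 ≤ (zstar - astar) (z - x)) :
    ∃ nstar : X →L[ℝ] ℝ, ∀ x astar, astar ∈ A x →
      nstar (z - x) ≤ (zstar - astar) (z - x) := by
  classical
  set K0 := (zstar - a0) (z - x0) with hK0_def
  set E : Set (X × ℝ) := {ws | ∃ (x : X) (astar : X →L[ℝ] ℝ) (t : ℝ) (c : X), astar ∈ A x ∧ 0 ≤ t ∧ t ≤ 1 ∧ c ∈ C ∧
      ws.1 = (z - x) + t • (c - z) ∧ (zstar - astar) (z - x) ≤ ws.2} with hE_def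
  have hEconv : Convex ℝ E := by
    rintro ⟨w₁, s₁⟩ h1 ⟨w₂, s₂⟩ h2 a b ha hb hab
    obtain ⟨x₁, a₁, t₁, c₁, hA₁, ht₁0, ht₁1, hc₁, hw₁, hs₁⟩ := h1
    obtain ⟨x₂, a₂, t₂, c₂, hA₂, ht₂0, ht₂1, hc₂, hw₂, hs₂⟩ := h2
    dsimp only at hw₁ hs₁ hw₂ hs₂
    have hb' : b = 1 - a := by linarith
    subst hb'
    have ha1 : a ≤ 1 := by linarith
    have hmono12 : 0 ≤ (a₁ - a₂) (x₁ - x₂) := hmono _ _ _ _ hA₁ hA₂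
    have hAmem : a • a₁ + (1-a) • a₂ ∈ A (a • x₁ + (1-a) • x₂) :=
      hadd _ _ _ _ (hsmul a x₁ a₁ hA₁) (hsmul (1-a) x₂ a₂ hA₂)
    have hfst : (a • ((w₁, s₁) : X × ℝ) + (1-a) • ((w₂, s₂) : X × ℝ)).1
        = a • w₁ + (1-a) • w₂ := by simp
    have hsnd : (a • ((w₁, s₁) : X × ℝ) + (1-a) • ((w₂, s₂) : X × ℝ)).2
        = a * s₁ + (1-a) * s₂ := by simp
    have hsineq : (zstar - (a • a₁ + (1-a) • a₂)) (z - (a • x₁ + (1-a) • x₂))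
        ≤ a * s₁ + (1-a) * s₂ := by
      simp only [ContinuousLinearMap.sub_apply, ContinuousLinearMap.add_apply,
        ContinuousLinearMap.smul_apply, map_sub, map_add, map_smul, smul_eq_mul] at hs₁ hs₂ hmono12 ⊢
      nlinarith [mul_le_mul_of_nonneg_left hs₁ ha,
        mul_le_mul_of_nonneg_left hs₂ (by linarith : (0:ℝ) ≤ 1 - a),
        mul_nonneg (mul_nonneg ha (by linarith : (0:ℝ) ≤ 1 - a)) hmono12]
    have htsum0 : 0 ≤ a * t₁ + (1-a) * t₂ :=
      add_nonneg (mul_nonneg ha ht₁0) (mul_nonneg (by linarith) ht₂0)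
    have htsum1 : a * t₁ + (1-a) * t₂ ≤ 1 := by nlinarith
    rcases eq_or_lt_of_le htsum0 with ht0 | ht0
    · have hz1 : a * t₁ = 0 := by nlinarith [mul_nonneg ha ht₁0, mul_nonneg (show (0:ℝ) ≤ 1-a by linarith) ht₂0]
      have hz2 : (1-a) * t₂ = 0 := by nlinarith [mul_nonneg ha ht₁0, mul_nonneg (show (0:ℝ) ≤ 1-a by linarith) ht₂0]
      refine ⟨a • x₁ + (1-a) • x₂, a • a₁ + (1-a) • a₂, a * t₁ + (1-a) * t₂, c₁,
        hAmem, htsum0, htsum1, hc₁, ?_, ?_⟩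
      · rw [hfst, hw₁, hw₂]
        match_scalars
        all_goals (first
          | ring1
          | linear_combination hz1
          | linear_combination -hz1
          | linear_combination hz2
          | linear_combination -hz2
          | linear_combination hz1 + hz2
          | linear_combination hz1 - hz2
          | linear_combination -hz1 + hz2
          | linear_combination -hz1 - hz2)
      · rw [hsnd]
        exact hsineq
    · have hne : a * t₁ + (1-a) * t₂ ≠ 0 := ne_of_gt ht0
      refine ⟨a • x₁ + (1-a) • x₂, a • a₁ + (1-a) • a₂, a * t₁ + (1-a) * t₂,
        ((a * t₁)/(a * t₁ + (1-a) * t₂)) • c₁ + (((1-a) * t₂)/(a * t₁ + (1-a) * t₂)) • c₂,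
        hAmem, htsum0, htsum1, ?_, ?_, ?_⟩
      · apply hCcv hc₁ hc₂ (div_nonneg (mul_nonneg ha ht₁0) ht0.le)
          (div_nonneg (mul_nonneg (by linarith) ht₂0) ht0.le)
        field_simp
      · rw [hfst, hw₁, hw₂]
        match_scalars <;> field_simp <;> ring
      · rw [hsnd]
        exact hsineq
  have hbox : ∀ (w : X) (s : ℝ), ‖w‖ < r → K0 ≤ s → ((w, s) : X × ℝ) ∈ E := by
    intro w s hw hs
    refine ⟨x0, a0, 1, x0 + w, ha0, zero_le_one, le_rfl,
      hball (by rw [mem_ball_iff_norm]; simpa using hw), ?_, hs⟩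
    show w = (z - x0) + (1:ℝ) • ((x0 + w) - z)
    module
  have hbox2 : Metric.ball (0:X) r ×ˢ Set.Ioi K0 ⊆ interior E := by
    apply interior_maximal
    · intro ws hws
      have := hbox ws.1 ws.2 (mem_ball_zero_iff.mp hws.1) (le_of_lt hws.2)
      simpa using this
    · exact (Metric.isOpen_ball).prod isOpen_Ioi
  have hEint : ((0:X), K0 + 1) ∈ interior E := by
    apply hbox2
    constructor
    · simpa using hr0
    · exact lt_add_one K0
  have h00 : ((0:X), (0:ℝ)) ∉ interior E := by
    intro h
    have hnb : interior E ∈ nhds ((0:X), (0:ℝ)) := isOpen_interior.mem_nhds h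
    rcases Metric.mem_nhds_iff.mp hnb with ⟨ρ, hρ0, hρ⟩
    have hdist : dist (((0:X), -(ρ/2)) : X × ℝ) (((0:X), (0:ℝ)) : X × ℝ) = ρ/2 := by
      rw [Prod.dist_eq]
      simp [Real.dist_eq, abs_of_pos hρ0]
      linarith
    have hmem : (((0:X), -(ρ/2)) : X × ℝ) ∈ E := by
      apply interior_subset
      apply hρ
      rw [Metric.mem_ball, hdist]
      linarith
    obtain ⟨x, astar, t, c, hA, ht0, ht1, hc, hw, hs⟩ := hmem
    have h0 : (z + t • (c - z)) - x = 0 := by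
      have key : (z + t • (c - z)) - x = (z - x) + t • (c - z) := by module
      rw [key]
      exact hw.symm
    have hxeq : x = (1-t) • z + t • c := by
      have hx' : z + t • (c - z) = x := sub_eq_zero.mp h0
      rw [← hx']
      module
    have hxC : x ∈ C := by
      rw [hxeq]
      exact hCcv hzC hc (by linarith) ht0 (by ring)
    have hpos := hrel0 x astar hA hxC
    have hs' : (zstar - astar) (z - x) ≤ -(ρ/2) := hs
    linarith
  obtain ⟨f, hf⟩ := geometric_hahn_banach_open_point hEconv.interior isOpen_interior h00
  have hf00 : f ((0:X), (0:ℝ)) = 0 := by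
    have h1 : (((0:X), (0:ℝ)) : X × ℝ) = 0 := rfl
    rw [h1, map_zero]
  have hfE : ∀ v ∈ E, f v ≤ 0 := by
    intro v hv
    apply aux_limit (f v) 0 (f ((0:X), K0+1) - f v)
    intro b hb0 hb2
    have hcombo : (1-b) • v + b • (((0:X), K0+1) : X × ℝ) ∈ interior E :=
      hEconv.combo_self_interior_mem_interior hv hEint (by linarith) hb0 (by ring)
    have hlt := hf _ hcombo
    rw [hf00] at hlt
    have hexp : f ((1-b) • v + b • (((0:X), K0+1) : X × ℝ))
        = f v + b * (f ((0:X), K0+1) - f v) := by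
      rw [map_add, map_smul, map_smul, smul_eq_mul, smul_eq_mul]
      ring
    rw [hexp] at hlt
    linarith
  set g : X →L[ℝ] ℝ := f.comp (ContinuousLinearMap.inl ℝ X ℝ) with hg_def
  set α : ℝ := f ((0:X), (1:ℝ)) with hα_def
  have hgw : ∀ w : X, g w = f (w, 0) := by
    intro w
    rw [hg_def]
    rfl
  have hfsplit : ∀ (w : X) (s : ℝ), f (w, s) = g w + s * α := by
    intro w s
    have h1 : ((w, s) : X × ℝ) = ((w, (0:ℝ)) : X × ℝ) + (((0:X), s) : X × ℝ) := by simp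
    have h2 : (((0:X), s) : X × ℝ) = s • (((0:X), (1:ℝ)) : X × ℝ) := by
      rw [Prod.smul_mk]
      simp
    rw [h1, map_add, h2, map_smul, smul_eq_mul, hgw, hα_def]
  have hg0 : g 0 = 0 := map_zero g
  have hα : α < 0 := by
    have h1 := hfE ((0:X), |K0| + 1) (hbox 0 _ (by simpa using hr0)
      (le_trans (le_abs_self K0) (by linarith)))
    rw [hfsplit, hg0] at h1
    have hα0 : α ≤ 0 := by nlinarith [abs_nonneg K0]
    rcases lt_or_eq_of_le hα0 with h | h
    · exact h
    · exfalso
      have hltint := hf _ hEint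
      rw [hf00, hfsplit, hg0, h] at hltint
      norm_num at hltint
  refine ⟨(-α)⁻¹ • g, ?_⟩
  intro x astar hA
  have hmem : (((z - x), (zstar - astar) (z - x)) : X × ℝ) ∈ E := by
    refine ⟨x, astar, 0, x0, hA, le_rfl, zero_le_one, hx0C, ?_, le_rfl⟩
    show z - x = (z - x) + (0:ℝ) • (x0 - z)
    module
  have h1 := hfE _ hmem
  rw [hfsplit] at h1
  have hpos : 0 < -α := by linarith
  have h2 : g (z - x) ≤ (zstar - astar) (z - x) * (-α) := by nlinarith
  have h3 : ((-α)⁻¹ • g) (z - x) = (-α)⁻¹ * g (z - x) := by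
    simp [ContinuousLinearMap.smul_apply, smul_eq_mul]
  rw [h3, inv_mul_le_iff₀ hpos]
  linarith


set_option maxHeartbeats 1000000 in
open Classical in
/-- Corollary: if `A` is maximal monotone, at most single-valued, and linear on its
domain, and `C` is nonempty closed convex with `dom A ∩ int C ≠ ∅`, then `A + N_C`
is maximal monotone. -/
theorem stmt_14 {X : Type*} [NormedAddCommGroup X] [NormedSpace ℝ X] [CompleteSpace X]
    (A : X → Set (X →L[ℝ] ℝ))
    (hsingle : ∀ x xstar ystar, xstar ∈ A x → ystar ∈ A x → xstar = ystar)
    (hadd : ∀ x y xstar ystar, xstar ∈ A x → ystar ∈ A y → xstar + ystar ∈ A (x + y))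
    (hsmul : ∀ (c : ℝ) x xstar, xstar ∈ A x → c • xstar ∈ A (c • x))
    (hmono : ∀ x y xstar ystar, xstar ∈ A x → ystar ∈ A y →
      0 ≤ (xstar - ystar) (x - y))
    (hmax : ∀ (z : X) (zstar : X →L[ℝ] ℝ),
      (∀ x xstar, xstar ∈ A x → 0 ≤ (zstar - xstar) (z - x)) → zstar ∈ A z)
    (C : Set X) (hCne : C.Nonempty) (hCcl : IsClosed C) (hCcv : Convex ℝ C)
    (hdom : ∃ x, (A x).Nonempty ∧ x ∈ interior C)
    (N : X → Set (X →L[ℝ] ℝ))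
    (hN : ∀ x, N x = if x ∈ C then {xstar | ∀ c ∈ C, xstar (c - x) ≤ 0} else ∅)
    (S : Set (X × (X →L[ℝ] ℝ)))
    (hS : S = {p | ∃ astar nstar : X →L[ℝ] ℝ,
      astar ∈ A p.1 ∧ nstar ∈ N p.1 ∧ p.2 = astar + nstar}) :
    (∀ p ∈ S, ∀ q ∈ S, 0 ≤ (p.2 - q.2) (p.1 - q.1)) ∧
    (∀ p : X × (X →L[ℝ] ℝ), (∀ q ∈ S, 0 ≤ (p.2 - q.2) (p.1 - q.1)) → p ∈ S) := by
  have hNC : ∀ x nstar, nstar ∈ N x → x ∈ C := by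
    intro x nstar hn
    by_contra hx
    rw [hN x, if_neg hx] at hn
    exact hn
  have hNle : ∀ x nstar, nstar ∈ N x → ∀ c ∈ C, nstar (c - x) ≤ 0 := by
    intro x nstar hn c hc
    have hx := hNC x nstar hn
    rw [hN x, if_pos hx] at hn
    exact hn c hc
  have hNmem : ∀ (x : X) (g : X →L[ℝ] ℝ), x ∈ C → (∀ c ∈ C, g (c - x) ≤ 0) → g ∈ N x := by
    intro x g hx hg
    rw [hN x, if_pos hx]
    exact hg
  constructor
  · -- monotonicity of S
    rintro p hp q hq
    rw [hS] at hp hq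
    obtain ⟨a1, n1, ha1, hn1, hp2⟩ := hp
    obtain ⟨a2, n2, ha2, hn2, hq2⟩ := hq
    have hp1C : p.1 ∈ C := hNC _ _ hn1
    have hq1C : q.1 ∈ C := hNC _ _ hn2
    have e1 : n1 (q.1 - p.1) ≤ 0 := hNle _ _ hn1 q.1 hq1C
    have e2 : n2 (p.1 - q.1) ≤ 0 := hNle _ _ hn2 p.1 hp1C
    have e3 : 0 ≤ (a1 - a2) (p.1 - q.1) := hmono _ _ _ _ ha1 ha2
    rw [hp2, hq2]
    have key : ((a1 + n1) - (a2 + n2)) (p.1 - q.1)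
        = (a1 - a2) (p.1 - q.1) + (-(n1 (q.1 - p.1))) + (-(n2 (p.1 - q.1))) := by
      simp only [ContinuousLinearMap.sub_apply, ContinuousLinearMap.add_apply, map_sub]
      ring
    rw [key]
    linarith
  · -- maximality
    rintro p hrel
    obtain ⟨z, zstar⟩ := p
    obtain ⟨x0, ⟨a0, ha0⟩, hx0⟩ := hdom
    obtain ⟨r, hr0, hball⟩ : ∃ r > 0, Metric.ball x0 r ⊆ C := by
      rcases Metric.mem_nhds_iff.mp (mem_interior_iff_mem_nhds.mp hx0) with ⟨r, hr0, hb⟩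
      exact ⟨r, hr0, hb⟩
    have hx0C : x0 ∈ C := interior_subset hx0
    have h0A : (0 : X →L[ℝ] ℝ) ∈ A 0 := by
      have := hsmul 0 x0 a0 ha0
      simpa using this
    have hSmem : ∀ (x : X) (astar g : X →L[ℝ] ℝ), astar ∈ A x → x ∈ C →
        (∀ c ∈ C, g (c - x) ≤ 0) → (x, astar + g) ∈ S := by
      intro x astar g ha hx hg
      rw [hS]
      exact ⟨astar, g, ha, hNmem x g hx hg, rfl⟩
    have hrel0 : ∀ x astar, astar ∈ A x → x ∈ C → 0 ≤ (zstar - astar) (z - x) := by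
      intro x astar ha hx
      have hmem : (x, astar + 0) ∈ S := hSmem x astar 0 ha hx (by intro c _; simp)
      have := hrel (x, astar + 0) hmem
      simpa using this
    have hrelN : ∀ (y : X) (ay g : X →L[ℝ] ℝ), ay ∈ A y → y ∈ C →
        (∀ c ∈ C, g (c - y) ≤ 0) → g (z - y) ≤ 0 := by
      intro y ay g hay hyC hg
      apply aux_G_nonpos ((zstar - ay) (z - y))
      intro s hs
      have hsg : ∀ c ∈ C, (s • g) (c - y) ≤ 0 := by
        intro c hc
        have h1 := mul_le_mul_of_nonneg_left (hg c hc) hs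
        simpa using h1
      have hmem := hrel (y, ay + s • g) (hSmem y ay (s • g) hay hyC hsg)
      have hexp : (zstar - (ay + s • g)) (z - y) = (zstar - ay) (z - y) - s * g (z - y) := by
        simp only [ContinuousLinearMap.sub_apply, ContinuousLinearMap.add_apply,
          ContinuousLinearMap.smul_apply, smul_eq_mul]
        ring
      have h2 : (0:ℝ) ≤ (zstar - (ay + s • g)) (z - y) := by simpa using hmem
      rw [hexp] at h2
      exact h2
    have hdenseAll : ∀ v : X, v ∈ closure {x : X | (A x).Nonempty} := by
      intro v
      by_contra hv
      have hconv : Convex ℝ (closure {x : X | (A x).Nonempty}) := by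
        apply Convex.closure
        intro x hx y hy a b ha hb _
        obtain ⟨xs, hxs⟩ := hx
        obtain ⟨ys, hys⟩ := hy
        exact ⟨a • xs + b • ys, hadd _ _ _ _ (hsmul a x xs hxs) (hsmul b y ys hys)⟩
      obtain ⟨f, u, hfu, hufv⟩ :=
        geometric_hahn_banach_closed_point hconv isClosed_closure hv
      have hf0 : ∀ x, (A x).Nonempty → f x = 0 := by
        intro x hx
        apply aux_eqzero (f x) u
        intro t
        have hmem : (t • x) ∈ closure {x : X | (A x).Nonempty} := by
          apply subset_closure
          obtain ⟨xs, hxs⟩ := hx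
          exact ⟨t • xs, hsmul t x xs hxs⟩
        have := hfu _ hmem
        rwa [map_smul, smul_eq_mul] at this
      have hfA : f ∈ A 0 := by
        apply hmax 0 f
        intro x xstar hx
        have hq : 0 ≤ xstar x := by
          have := hmono x 0 xstar 0 hx h0A
          simpa using this
        have hfx : f x = 0 := hf0 x ⟨xstar, hx⟩
        simp only [ContinuousLinearMap.sub_apply, zero_sub, map_neg, hfx]
        simpa using hq
      have hfeq : f = 0 := hsingle 0 f 0 hfA h0A
      have h0mem : (0:X) ∈ closure {x : X | (A x).Nonempty} := subset_closure ⟨0, h0A⟩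
      have h1 := hfu 0 h0mem
      rw [hfeq] at hufv
      simp at h1 hufv
      linarith
    have hdense : ∀ (v : X) (ε : ℝ), 0 < ε → ∃ d astar, astar ∈ A d ∧ ‖d - v‖ < ε := by
      intro v ε hε
      obtain ⟨d, hd, hdist⟩ := Metric.mem_closure_iff.mp (hdenseAll v) ε hε
      obtain ⟨astar, hastar⟩ := hd
      refine ⟨d, astar, hastar, ?_⟩
      rw [dist_comm, dist_eq_norm] at hdist
      exact hdist
    have hpull : ∀ c ∈ C, ∀ s : ℝ, 0 < s → s ≤ 1 →
        Metric.ball (c + s • (x0 - c)) (s * r) ⊆ C := by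
      intro c hc s hs0 hs1 w hw
      have hnorm : ‖w - (c + s • (x0 - c))‖ < s * r := mem_ball_iff_norm.mp hw
      set u := s⁻¹ • (w - (c + s • (x0 - c))) with hu_def
      have hu : ‖u‖ < r := by
        rw [hu_def, norm_smul, Real.norm_eq_abs, abs_of_pos (inv_pos.mpr hs0)]
        have h1 := mul_lt_mul_of_pos_left hnorm (inv_pos.mpr hs0)
        have h2 : s⁻¹ * (s * r) = r := by field_simp
        rwa [h2] at h1
      have hx0u : x0 + u ∈ C := hball (mem_ball_iff_norm.mpr (by simpa using hu))
      have hcomb := hCcv hc hx0u (by linarith : (0:ℝ) ≤ 1 - s) hs0.le (by ring)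
      have hwe : w = (1 - s) • c + s • (x0 + u) := by
        rw [hu_def, smul_add, smul_smul, mul_inv_cancel₀ (ne_of_gt hs0), one_smul]
        module
      rw [hwe]
      exact hcomb
    -- Step 1 : z ∈ C
    have hzC : z ∈ C :=
      step_one A hadd hsmul C hCcl hCcv z x0 a0 ha0 r hr0 hball hx0C hdense hrelN hpull
    -- Step 2 : nstar with nstar (z - x) ≤ (zstar - astar) (z - x) on dom A
    obtain ⟨nstar, hkey⟩ :=
      step_two A hadd hsmul hmono C hCcv z x0 zstar a0 ha0 r hr0 hball hx0C hzC hrel0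
    have hrelA : ∀ x xstar, xstar ∈ A x → 0 ≤ ((zstar - nstar) - xstar) (z - x) := by
      intro x xstar hx
      have h1 := hkey x xstar hx
      have h2 : ((zstar - nstar) - xstar) (z - x)
          = (zstar - xstar) (z - x) - nstar (z - x) := by
        simp only [ContinuousLinearMap.sub_apply]
        ring
      rw [h2]
      linarith
    have hAz : zstar - nstar ∈ A z := hmax z (zstar - nstar) hrelA
    have hsub2 : ∀ (v : X) (av : X →L[ℝ] ℝ), av ∈ A v → av - (zstar - nstar) ∈ A (v - z) := by
      intro v av hv
      have hneg : -(zstar - nstar) ∈ A (-z) := by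
        have := hsmul (-1) z (zstar - nstar) hAz
        rwa [neg_one_smul, neg_one_smul ℝ (zstar - nstar)] at this
      have := hadd v (-z) av (-(zstar - nstar)) hv hneg
      rw [← sub_eq_add_neg, ← sub_eq_add_neg] at this
      exact this
    have hnstarD : ∀ (d : X) (ad : X →L[ℝ] ℝ), ad ∈ A d → d ∈ C → nstar (d - z) ≤ 0 := by
      intro d ad had hdC
      have hQ : 0 ≤ (ad - (zstar - nstar)) (d - z) := hmono d z ad (zstar - nstar) had hAz
      apply aux_tQ _ _ hQ
      intro t ht0 ht1
      have haxt : (zstar - nstar) + t • (ad - (zstar - nstar)) ∈ A (z + t • (d - z)) :=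
        hadd z (t • (d - z)) _ _ hAz (hsmul t _ _ (hsub2 d ad had))
      have hxtC : z + t • (d - z) ∈ C := by
        have he : z + t • (d - z) = (1-t) • z + t • d := by module
        rw [he]
        exact hCcv hzC hdC (by linarith) ht0.le (by ring)
      have h0 := hrel0 _ _ haxt hxtC
      have hexp : (zstar - ((zstar - nstar) + t • (ad - (zstar - nstar)))) (z - (z + t • (d - z)))
          = t * (t * ((ad - (zstar - nstar)) (d - z)) - nstar (d - z)) := by
        simp only [ContinuousLinearMap.sub_apply, ContinuousLinearMap.add_apply,
          ContinuousLinearMap.smul_apply, map_sub, map_add, map_smul, smul_eq_mul]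
        ring
      rw [hexp] at h0
      have h1 : t * 0 ≤ t * (t * ((ad - (zstar - nstar)) (d - z)) - nstar (d - z)) := by
        rw [mul_zero]; exact h0
      have h2 := (mul_le_mul_iff_right₀ ht0).mp h1
      linarith
    have hnstarC : ∀ c ∈ C, nstar (c - z) ≤ 0 := by
      intro c hc
      by_contra hpos
      push_neg at hpos
      set L := ‖x0 - c‖ + r with hL_def
      have hL : 0 < L := by
        have := norm_nonneg (x0 - c)
        simp only [hL_def]
        linarith
      have hnstar_pos : (0:ℝ) < ‖nstar‖ + 1 := by positivity
      have hden : (0:ℝ) < 2 * (‖nstar‖ + 1) * L := by positivity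
      set s := min (1/2) (nstar (c - z) / (2 * (‖nstar‖ + 1) * L)) with hs_def
      have hs0 : 0 < s := lt_min (by norm_num) (div_pos hpos hden)
      have hs1 : s ≤ 1 := le_trans (min_le_left _ _) (by norm_num)
      obtain ⟨d, ad, had, hdd⟩ := hdense (c + s • (x0 - c)) (s * r) (mul_pos hs0 hr0)
      have hdC : d ∈ C := hpull c hc s hs0 hs1 (mem_ball_iff_norm.mpr hdd)
      have h1 := hnstarD d ad had hdC
      have h2 : ‖d - c‖ ≤ s * L := by
        have h3 : ‖d - c‖ ≤ ‖d - (c + s • (x0 - c))‖ + ‖s • (x0 - c)‖ := by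
          have hn := norm_add_le (d - (c + s • (x0 - c))) (s • (x0 - c))
          have he : (d - (c + s • (x0 - c))) + s • (x0 - c) = d - c := by module
          rwa [he] at hn
        have h4 : ‖s • (x0 - c)‖ = s * ‖x0 - c‖ := by
          rw [norm_smul, Real.norm_eq_abs, abs_of_pos hs0]
        rw [h4] at h3
        rw [hL_def]
        nlinarith [hdd]
      have h5 : nstar (c - z) ≤ nstar (c - d) := by
        have he : nstar (c - z) = nstar (d - z) + nstar (c - d) := by
          rw [← map_add]
          congr 1
          module
        rw [he]
        linarith
      have h6 : nstar (c - d) ≤ ‖nstar‖ * ‖d - c‖ := by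
        have hop := nstar.le_opNorm (c - d)
        have habs := le_abs_self (nstar (c - d))
        have h7 : ‖c - d‖ = ‖d - c‖ := norm_sub_rev _ _
        calc nstar (c - d) ≤ |nstar (c - d)| := habs
          _ = ‖nstar (c - d)‖ := (Real.norm_eq_abs _).symm
          _ ≤ ‖nstar‖ * ‖c - d‖ := hop
          _ = ‖nstar‖ * ‖d - c‖ := by rw [h7]
      have h9 : ‖nstar‖ * ‖d - c‖ ≤ (‖nstar‖ + 1) * (s * L) := by
        have ha' := mul_le_mul_of_nonneg_left h2 (norm_nonneg nstar)
        have hb' : 0 ≤ s * L := mul_nonneg hs0.le hL.le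
        nlinarith
      have h8 : s ≤ nstar (c - z) / (2 * (‖nstar‖ + 1) * L) := min_le_right _ _
      have h10 : (‖nstar‖ + 1) * (s * L) ≤ nstar (c - z) / 2 := by
        calc (‖nstar‖ + 1) * (s * L) = ((‖nstar‖ + 1) * L) * s := by ring
          _ ≤ ((‖nstar‖ + 1) * L) * (nstar (c - z) / (2 * (‖nstar‖ + 1) * L)) := by
              apply mul_le_mul_of_nonneg_left h8 (by positivity)
          _ = nstar (c - z) / 2 := by
              field_simp
      have hchain : nstar (c - z) ≤ nstar (c - z) / 2 :=
        le_trans h5 (le_trans h6 (le_trans h9 h10))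
      linarith [hchain, hpos]
    have hNz : nstar ∈ N z := hNmem z nstar hzC hnstarC
    show (z, zstar) ∈ S
    rw [hS]
    exact ⟨zstar - nstar, nstar, hAz, hNz, (sub_add_cancel zstar nstar).symm⟩
end

section
/- Let A : X ⇉ X* be a maximal monotone linear relation and suppose (z, y*) ∈ dom F_A, where F_A is the Fitzpatrick function of A. Then z ∈ cl(dom A). -/
/-- For a maximal monotone linear relation `A` with graph `G`, if `(z, y*)` is in the
domain of the Fitzpatrick function, then `z ∈ cl (dom A)`. -/
theorem stmt_16 {X : Type*} [NormedAddCommGroup X] [NormedSpace ℝ X] [CompleteSpace X]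
    (G : Submodule ℝ (X × (X →L[ℝ] ℝ)))
    (hmono : ∀ p ∈ G, ∀ q ∈ G, 0 ≤ (p.2 - q.2) (p.1 - q.1))
    (hmax : ∀ p : X × (X →L[ℝ] ℝ), (∀ q ∈ G, 0 ≤ (p.2 - q.2) (p.1 - q.1)) → p ∈ G)
    (F : X × (X →L[ℝ] ℝ) → EReal)
    (hF : ∀ p, F p = sSup {r : EReal | ∃ q ∈ (G : Set (X × (X →L[ℝ] ℝ))),
      r = ((q.2 p.1 + p.2 q.1 - q.2 q.1 : ℝ) : EReal)})
    (z : X) (ystar : X →L[ℝ] ℝ) (hdomF : F (z, ystar) < ⊤) :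
    z ∈ closure {x : X | ∃ xstar, (x, xstar) ∈ G} := by
  by_contra hz
  set S : Set X := {x : X | ∃ xstar, (x, xstar) ∈ G} with hS
  have hSsub : S = ↑(Submodule.map (LinearMap.fst ℝ X (X →L[ℝ] ℝ)) G) := by
    ext x
    simp only [SetLike.mem_coe, Submodule.mem_map, LinearMap.fst_apply, Set.mem_setOf_eq, hS]
    constructor
    · rintro ⟨y, hy⟩; exact ⟨(x, y), hy, rfl⟩
    · rintro ⟨⟨a, b⟩, hab, rfl⟩; exact ⟨b, hab⟩
  obtain ⟨f, u, hfu, huz⟩ := geometric_hahn_banach_closed_point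
    (Convex.closure (by rw [hSsub]; exact (Submodule.map (LinearMap.fst ℝ X (X →L[ℝ] ℝ)) G).convex))
    isClosed_closure hz
  have h0S : (0 : X) ∈ S := ⟨0, G.zero_mem⟩
  have hu : 0 < u := by simpa using hfu 0 (subset_closure h0S)
  have hfz : 0 < f z := lt_trans hu huz
  have hfS : ∀ x ∈ S, f x = 0 := by
    intro x hx
    by_contra hne
    have hmem : ∀ t : ℝ, t • x ∈ S := by
      intro t
      obtain ⟨y, hy⟩ := hx
      exact ⟨t • y, by simpa [Prod.smul_mk] using G.smul_mem t hy⟩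
    have hlt : ∀ t : ℝ, t * f x < u := by
      intro t
      simpa using hfu (t • x) (subset_closure (hmem t))
    have := hlt (u / f x)
    rw [div_mul_cancel₀ u hne] at this
    exact lt_irrefl u this
  have hmemG : ∀ t : ℝ, ((0 : X), t • f) ∈ G := by
    intro t
    apply hmax
    intro q hq
    have hq1 : f q.1 = 0 := hfS q.1 ⟨q.2, hq⟩
    have hq2 : (0 : ℝ) ≤ q.2 q.1 := by simpa using hmono q hq 0 G.zero_mem
    simpa [hq1] using hq2
  obtain ⟨r, hr1, hr2⟩ := EReal.lt_iff_exists_real_btwn.mp hdomF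
  have key : ∀ t : ℝ, ((t * f z : ℝ) : EReal) ≤ F (z, ystar) := by
    intro t
    rw [hF]
    apply le_sSup
    refine ⟨((0 : X), t • f), hmemG t, ?_⟩
    simp
  have h1 := key ((r + 1) / f z)
  rw [div_mul_cancel₀ (r + 1) (ne_of_gt hfz)] at h1
  have : ((r + 1 : ℝ) : EReal) < ((r : ℝ) : EReal) := lt_of_le_of_lt h1 hr1
  rw [EReal.coe_lt_coe_iff] at this
  linarith
end

section
/- Let f, g : X → (−∞,+∞] be proper convex functions on a Banach space X, and suppose there exists x₀ ∈ dom f ∩ dom g such that g is continuous at x₀. Then for every z* ∈ X* there exists y* ∈ X* with (f+g)*(z*) = f*(y*) + g*(z* − y*), i.e., the infimal convolution in the Fenchel duality formula for the conjugate of a sum is exact. -/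
/-- Rockafellar: if `f, g` are proper convex and `g` is continuous at some point of
`dom f ∩ dom g`, then for every `z*` the Fenchel conjugate of the sum is an exact
infimal convolution: `(f+g)*(z*) = f*(y*) + g*(z*-y*)` for some `y*`. -/
theorem stmt_17 {X : Type*} [NormedAddCommGroup X] [NormedSpace ℝ X] [CompleteSpace X]
    (f g : X → EReal)
    (hfbot : ∀ x, f x ≠ ⊥) (hfprop : ∃ x, f x ≠ ⊤)
    (hgbot : ∀ x, g x ≠ ⊥) (hgprop : ∃ x, g x ≠ ⊤)
    (hfconv : ∀ x y : X, ∀ lam ∈ Set.Icc (0:ℝ) 1,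
      f (lam • x + (1 - lam) • y) ≤ (lam : EReal) * f x + ((1 - lam : ℝ) : EReal) * f y)
    (hgconv : ∀ x y : X, ∀ lam ∈ Set.Icc (0:ℝ) 1,
      g (lam • x + (1 - lam) • y) ≤ (lam : EReal) * g x + ((1 - lam : ℝ) : EReal) * g y)
    (x₀ : X) (hx₀f : f x₀ ≠ ⊤) (hx₀g : g x₀ ≠ ⊤) (hgcont : ContinuousAt g x₀)
    (conj : (X → EReal) → (X →L[ℝ] ℝ) → EReal)
    (hconj : ∀ (h : X → EReal) (xstar : X →L[ℝ] ℝ),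
      conj h xstar = sSup (Set.range fun x => ((xstar x : ℝ) : EReal) - h x)) :
    ∀ zstar : X →L[ℝ] ℝ, ∃ ystar : X →L[ℝ] ℝ,
      conj (fun x => f x + g x) zstar = conj f ystar + conj g (zstar - ystar) := by
  intro zstar
  obtain ⟨p, hp⟩ : ∃ r : ℝ, f x₀ = (r : EReal) :=
    ⟨(f x₀).toReal, (EReal.coe_toReal hx₀f (hfbot x₀)).symm⟩
  obtain ⟨q, hq⟩ : ∃ r : ℝ, g x₀ = (r : EReal) :=
    ⟨(g x₀).toReal, (EReal.coe_toReal hx₀g (hgbot x₀)).symm⟩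
  -- the easy inequality
  have easy : ∀ ystar : X →L[ℝ] ℝ,
      conj (fun x => f x + g x) zstar ≤ conj f ystar + conj g (zstar - ystar) := by
    intro y
    rw [hconj]
    apply sSup_le
    rintro e ⟨x, rfl⟩
    dsimp only
    by_cases hfx : f x = ⊤
    · have : f x + g x = ⊤ := by rw [hfx]; exact EReal.top_add_of_ne_bot (hgbot x)
      simp only [this]
      simp
    by_cases hgx : g x = ⊤
    · have : f x + g x = ⊤ := by
        rw [hgx, add_comm]; exact EReal.top_add_of_ne_bot (hfbot x)
      simp only [this]
      simp
    obtain ⟨r₁, hr₁⟩ : ∃ r : ℝ, f x = (r : EReal) :=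
      ⟨(f x).toReal, (EReal.coe_toReal hfx (hfbot x)).symm⟩
    obtain ⟨r₂, hr₂⟩ : ∃ r : ℝ, g x = (r : EReal) :=
      ⟨(g x).toReal, (EReal.coe_toReal hgx (hgbot x)).symm⟩
    have h1 : ((y x - r₁ : ℝ) : EReal) ≤ conj f y := by
      rw [hconj]
      refine le_sSup ⟨x, ?_⟩
      dsimp only
      rw [hr₁, ← EReal.coe_sub]
    have h2 : (((zstar - y) x - r₂ : ℝ) : EReal) ≤ conj g (zstar - y) := by
      rw [hconj]
      refine le_sSup ⟨x, ?_⟩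
      dsimp only
      rw [hr₂, ← EReal.coe_sub]
    have h3 : ((zstar x : ℝ) : EReal) - (f x + g x)
        = ((y x - r₁ : ℝ) : EReal) + (((zstar - y) x - r₂ : ℝ) : EReal) := by
      rw [hr₁, hr₂, ← EReal.coe_add, ← EReal.coe_sub, ← EReal.coe_add]
      norm_cast
      simp [ContinuousLinearMap.sub_apply]
      ring
    rw [h3]
    exact add_le_add h1 h2
  -- trivial case : conjugate of sum is ⊤
  by_cases htop : conj (fun x => f x + g x) zstar = ⊤
  · exact ⟨0, le_antisymm (easy 0) (htop ▸ le_top)⟩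
  -- main case
  have hbot : conj (fun x => f x + g x) zstar ≠ ⊥ := by
    rw [hconj]
    intro hb
    have h1 : ((zstar x₀ : ℝ) : EReal) - (f x₀ + g x₀)
        ≤ sSup (Set.range fun x => ((zstar x : ℝ) : EReal) - (f x + g x)) :=
      le_sSup ⟨x₀, rfl⟩
    rw [hb, le_bot_iff, hp, hq, ← EReal.coe_add, ← EReal.coe_sub] at h1
    exact EReal.coe_ne_bot _ h1
  obtain ⟨a, ha⟩ : ∃ r : ℝ, conj (fun x => f x + g x) zstar = (r : EReal) :=
    ⟨_, (EReal.coe_toReal htop hbot).symm⟩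
  -- the key pointwise inequality
  have keyr : ∀ (x : X) (r₁ r₂ : ℝ), f x = (r₁ : EReal) → g x = (r₂ : EReal) →
      zstar x - a ≤ r₁ + r₂ := by
    intro x r₁ r₂ h₁ h₂
    have h3 : ((zstar x : ℝ) : EReal) - (f x + g x) ≤ (a : EReal) := by
      rw [← ha, hconj]
      exact le_sSup ⟨x, rfl⟩
    rw [h₁, h₂, ← EReal.coe_add, ← EReal.coe_sub, EReal.coe_le_coe_iff] at h3
    linarith
  -- real value extraction helper
  have hreal : ∀ (h : X → EReal), (∀ x, h x ≠ ⊥) → ∀ x : X, h x ≠ ⊤ →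
      ∃ r : ℝ, h x = (r : EReal) := fun h hb x ht =>
    ⟨(h x).toReal, (EReal.coe_toReal ht (hb x)).symm⟩
  -- the two sets
  set A : Set (X × ℝ) := {p | f p.1 ≤ ((p.2 : ℝ) : EReal)} with hA
  set C : Set (X × ℝ) :=
    {p | ((p.2 : ℝ) : EReal) < ((zstar p.1 : ℝ) : EReal) - (a : EReal) - g p.1} with hC
  -- from membership in C, g is real there
  have hCreal : ∀ p ∈ C, ∃ r : ℝ, g p.1 = (r : EReal) ∧ p.2 < zstar p.1 - a - r := by
    rintro ⟨x, t⟩ hpt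
    simp only [hC, Set.mem_setOf_eq] at hpt
    have hgx : g x ≠ ⊤ := by
      intro hgt
      rw [hgt] at hpt
      rw [← EReal.coe_sub] at hpt
      simp at hpt
    obtain ⟨r, hr⟩ := hreal g hgbot x hgx
    refine ⟨r, hr, ?_⟩
    rw [hr, ← EReal.coe_sub, ← EReal.coe_sub, EReal.coe_lt_coe_iff] at hpt
    exact hpt
  have hAreal : ∀ p ∈ A, ∃ r : ℝ, f p.1 = (r : EReal) ∧ r ≤ p.2 := by
    rintro ⟨x, t⟩ hpt
    simp only [hA, Set.mem_setOf_eq] at hpt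
    have hfx : f x ≠ ⊤ := (lt_of_le_of_lt hpt (EReal.coe_lt_top t)).ne
    obtain ⟨r, hr⟩ := hreal f hfbot x hfx
    refine ⟨r, hr, ?_⟩
    rw [hr, EReal.coe_le_coe_iff] at hpt
    exact hpt
  have hAconv : Convex ℝ A := by
    rintro ⟨x₁, t₁⟩ h₁ ⟨x₂, t₂⟩ h₂ lam mu hlam hmu hsum
    obtain ⟨r₁, hr₁, hle₁⟩ := hAreal _ h₁
    obtain ⟨r₂, hr₂, hle₂⟩ := hAreal _ h₂
    have hmu' : mu = 1 - lam := by linarith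
    simp only [hA, Set.mem_setOf_eq, Prod.smul_mk, Prod.mk_add_mk, smul_eq_mul]
    subst hmu'
    calc f (lam • x₁ + (1 - lam) • x₂)
        ≤ (lam : EReal) * f x₁ + ((1 - lam : ℝ) : EReal) * f x₂ :=
          hfconv x₁ x₂ lam ⟨hlam, by linarith⟩
      _ = ((lam * r₁ + (1 - lam) * r₂ : ℝ) : EReal) := by
          rw [hr₁, hr₂]; norm_cast
      _ ≤ ((lam * t₁ + (1 - lam) * t₂ : ℝ) : EReal) := by
          rw [EReal.coe_le_coe_iff]
          have := mul_le_mul_of_nonneg_left hle₁ hlam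
          have := mul_le_mul_of_nonneg_left hle₂ hmu
          linarith
  have hCconv : Convex ℝ C := by
    rintro ⟨x₁, t₁⟩ h₁ ⟨x₂, t₂⟩ h₂ lam mu hlam hmu hsum
    obtain ⟨r₁, hr₁, hlt₁⟩ := hCreal _ h₁
    obtain ⟨r₂, hr₂, hlt₂⟩ := hCreal _ h₂
    have hmu' : mu = 1 - lam := by linarith
    subst hmu'
    have hgc : g (lam • x₁ + (1 - lam) • x₂) ≤ ((lam * r₁ + (1 - lam) * r₂ : ℝ) : EReal) := by
      calc g (lam • x₁ + (1 - lam) • x₂)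
          ≤ (lam : EReal) * g x₁ + ((1 - lam : ℝ) : EReal) * g x₂ :=
            hgconv x₁ x₂ lam ⟨hlam, by linarith⟩
        _ = _ := by rw [hr₁, hr₂]; norm_cast
    have hgtop : g (lam • x₁ + (1 - lam) • x₂) ≠ ⊤ :=
      (lt_of_le_of_lt hgc (EReal.coe_lt_top _)).ne
    obtain ⟨rc, hrc⟩ := hreal g hgbot _ hgtop
    have hrcle : rc ≤ lam * r₁ + (1 - lam) * r₂ := by
      rw [hrc, EReal.coe_le_coe_iff] at hgc; exact hgc
    simp only [hC, Set.mem_setOf_eq, Prod.smul_mk, Prod.mk_add_mk, smul_eq_mul]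
    rw [hrc, ← EReal.coe_sub, ← EReal.coe_sub, EReal.coe_lt_coe_iff, map_add, map_smul,
      map_smul]
    simp only [smul_eq_mul]
    rcases eq_or_lt_of_le hlam with hl0 | hlpos
    · rw [← hl0] at hrcle ⊢
      simp only [zero_mul, sub_zero, zero_add, one_mul] at hrcle ⊢
      linarith
    · have h1 : lam * t₁ < lam * (zstar x₁ - a - r₁) := by
        exact mul_lt_mul_of_pos_left hlt₁ hlpos
      have h2 : (1 - lam) * t₂ ≤ (1 - lam) * (zstar x₂ - a - r₂) :=
        mul_le_mul_of_nonneg_left (le_of_lt hlt₂) hmu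
      nlinarith
  have hdisj : Disjoint A C := by
    rw [Set.disjoint_left]
    rintro ⟨x, t⟩ hpA hpC
    obtain ⟨r₁, hr₁, hle₁⟩ := hAreal _ hpA
    obtain ⟨r₂, hr₂, hlt₂⟩ := hCreal _ hpC
    have := keyr x r₁ r₂ hr₁ hr₂
    simp only at hle₁ hlt₂
    linarith
  -- the open set inside C
  have hq1 : g x₀ < ((q + 1 : ℝ) : EReal) := by rw [hq]; exact_mod_cast lt_add_one q
  have hev : ∀ᶠ x in nhds x₀, g x < ((q + 1 : ℝ) : EReal) :=
    hgcont.eventually_lt continuousAt_const hq1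
  obtain ⟨δ, hδpos, hδ⟩ := Metric.eventually_nhds_iff_ball.mp hev
  set O : Set (X × ℝ) :=
    {p | p.1 ∈ Metric.ball x₀ δ ∧ p.2 < zstar p.1 - a - (q + 1)} with hO
  have hOopen : IsOpen O := by
    apply IsOpen.inter
    · exact Metric.isOpen_ball.preimage continuous_fst
    · exact isOpen_lt continuous_snd
        (((zstar.continuous.comp continuous_fst).sub continuous_const).sub continuous_const)
  have hOC : O ⊆ C := by
    rintro ⟨x, t⟩ ⟨hx, ht⟩
    have hgx := hδ x hx
    have hgtop : g x ≠ ⊤ := hgx.ne_top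
    obtain ⟨r, hr⟩ := hreal g hgbot x hgtop
    have hrlt : r < q + 1 := by rw [hr, EReal.coe_lt_coe_iff] at hgx; exact hgx
    simp only [hC, Set.mem_setOf_eq]
    rw [hr, ← EReal.coe_sub, ← EReal.coe_sub, EReal.coe_lt_coe_iff]
    simp only at ht
    linarith
  have hOint : O ⊆ interior C := interior_maximal hOC hOopen
  have hq₀O : ((x₀, zstar x₀ - a - (q + 1) - 1) : X × ℝ) ∈ O :=
    ⟨Metric.mem_ball_self hδpos, by dsimp only; linarith⟩
  -- separation
  obtain ⟨φ, u, hlt, hge⟩ :=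
    geometric_hahn_banach_open (hCconv.interior) isOpen_interior hAconv
      ((hdisj.symm).mono_left interior_subset)
  set s : ℝ := φ (0, 1) with hs
  set w : X → ℝ := fun x => φ (x, 0) with hw
  have hφ : ∀ (x : X) (t : ℝ), φ (x, t) = w x + t * s := by
    intro x t
    have h1 : ((x, t) : X × ℝ) = (x, 0) + t • ((0 : X), (1 : ℝ)) := by
      simp [Prod.ext_iff]
    rw [h1, map_add, map_smul, smul_eq_mul, hw, hs]
  -- φ ≤ u on all of C
  have hCle : ∀ p ∈ C, φ p ≤ u := by
    intro p hpC
    set q₀ : X × ℝ := (x₀, zstar x₀ - a - (q + 1) - 1) with hq₀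
    have hq₀int : q₀ ∈ interior C := hOint hq₀O
    have hcont : Continuous fun r : ℝ => φ (r • q₀ + (1 - r) • p) := by fun_prop
    have h0 : φ ((0 : ℝ) • q₀ + (1 - 0 : ℝ) • p) = φ p := by simp
    have ht : Filter.Tendsto (fun r : ℝ => φ (r • q₀ + (1 - r) • p))
        (nhdsWithin 0 (Set.Ioi 0)) (nhds (φ p)) := by
      rw [← h0]
      exact ((hcont.tendsto 0).mono_left nhdsWithin_le_nhds)
    refine le_of_tendsto ht ?_
    filter_upwards [Ioc_mem_nhdsGT_of_mem (Set.mem_Ico.mpr ⟨le_refl 0, zero_lt_one⟩)]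
      with r hr
    exact (hlt _ (hCconv.combo_interior_closure_mem_interior hq₀int (subset_closure hpC)
      hr.1 (by linarith [hr.2]) (by ring))).le
  -- s ≠ 0
  have hs0 : s ≠ 0 := by
    intro hs0
    have h1 : φ ((x₀, zstar x₀ - a - (q + 1) - 1) : X × ℝ) < u := hlt _ (hOint hq₀O)
    have h2 : u ≤ φ ((x₀, p) : X × ℝ) := hge _ (by simp only [hA, Set.mem_setOf_eq]; rw [hp])
    rw [hφ, hs0] at h1 h2
    simp at h1 h2
    linarith
  -- s ≥ 0
  have hsnn : 0 ≤ s := by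
    by_contra hneg
    push_neg at hneg
    set t : ℝ := max p ((u - w x₀ - 1) / s) with ht
    have hmemA : ((x₀, t) : X × ℝ) ∈ A := by
      simp only [hA, Set.mem_setOf_eq]; rw [hp]
      exact_mod_cast le_max_left _ _
    have h1 := hge _ hmemA
    rw [hφ] at h1
    have h2 : t * s ≤ ((u - w x₀ - 1) / s) * s :=
      mul_le_mul_of_nonpos_right (le_max_right _ _) hneg.le
    rw [div_mul_cancel₀ _ (ne_of_lt hneg)] at h2
    linarith
  have hspos : 0 < s := lt_of_le_of_ne hsnn (Ne.symm hs0)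
  -- the candidate ystar
  set W : X →L[ℝ] ℝ := φ.comp (ContinuousLinearMap.inl ℝ X ℝ) with hW
  set ystar : X →L[ℝ] ℝ := (-(s⁻¹)) • W with hys
  have hyx : ∀ x : X, ystar x = -(w x) / s := by
    intro x
    simp only [hys, ContinuousLinearMap.smul_apply, hW, ContinuousLinearMap.comp_apply,
      ContinuousLinearMap.inl_apply, smul_eq_mul, hw]
    ring
  refine ⟨ystar, ?_⟩
  -- bound on conj f ystar
  have B1 : conj f ystar ≤ ((-u / s : ℝ) : EReal) := by
    rw [hconj]
    apply sSup_le
    rintro e ⟨x, rfl⟩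
    dsimp only
    by_cases hfx : f x = ⊤
    · rw [hfx]; simp
    obtain ⟨r, hr⟩ := hreal f hfbot x hfx
    have hmemA : ((x, r) : X × ℝ) ∈ A := by
      simp only [hA, Set.mem_setOf_eq]; rw [hr]
    have h1 := hge _ hmemA
    rw [hφ] at h1
    rw [hr, ← EReal.coe_sub, EReal.coe_le_coe_iff, hyx]
    have h2 : u / s ≤ (w x + r * s) / s := (div_le_div_iff_of_pos_right hspos).mpr h1
    have h3 : (w x + r * s) / s = w x / s + r := by field_simp
    rw [h3] at h2
    rw [neg_div, neg_div]
    linarith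
  -- bound on conj g (zstar - ystar)
  have B2 : conj g (zstar - ystar) ≤ ((a + u / s : ℝ) : EReal) := by
    rw [hconj]
    apply sSup_le
    rintro e ⟨x, rfl⟩
    dsimp only
    by_cases hgx : g x = ⊤
    · rw [hgx]; simp
    obtain ⟨r, hr⟩ := hreal g hgbot x hgx
    have hT : zstar x - a - r ≤ (u - w x) / s := by
      by_contra hcon
      push_neg at hcon
      set t : ℝ := ((u - w x) / s + (zstar x - a - r)) / 2 with ht
      have htlt : t < zstar x - a - r := by rw [ht]; linarith
      have hmemC : ((x, t) : X × ℝ) ∈ C := by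
        simp only [hC, Set.mem_setOf_eq]
        rw [hr, ← EReal.coe_sub, ← EReal.coe_sub, EReal.coe_lt_coe_iff]
        exact htlt
      have h1 := hCle _ hmemC
      rw [hφ] at h1
      have h2 : t ≤ (u - w x) / s := by
        rw [le_div_iff₀ hspos]; linarith
      rw [ht] at h2
      linarith [hcon]
    rw [hr, ← EReal.coe_sub, EReal.coe_le_coe_iff]
    have h3 : (zstar - ystar) x = zstar x - ystar x := by
      simp [ContinuousLinearMap.sub_apply]
    have h4 : (u - w x) / s = u / s + ystar x := by
      rw [hyx, sub_div, neg_div]; ring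
    rw [h3]
    linarith [hT, h4.le, h4.ge]
  -- conclude
  refine le_antisymm (easy ystar) ?_
  calc conj f ystar + conj g (zstar - ystar)
      ≤ ((-u / s : ℝ) : EReal) + ((a + u / s : ℝ) : EReal) := add_le_add B1 B2
    _ = ((a : ℝ) : EReal) := by rw [← EReal.coe_add]; congr 1; ring
    _ = conj (fun x => f x + g x) zstar := ha.symm
end
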